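/- Let A be a unital associative ℂ-algebra, N ≥ 1 an integer, F ∈ ℂ, X, Y ∈ M_N(A), and S an invertible N²×N² complex matrix with rows and columns indexed by pairs in {1,…,N}². In M_{N²}(A) set X₁ = X⊗I_N and Y₂ = I_N⊗Y, and for an N²×N² matrix M let M^{t₁} denote partial transposition in the first factor, (M^{t₁})_{(a,b),(c,d)} = M_{(c,b),(a,d)}. If X₁·Y₂ = F · Y₂ · (S⁻¹)^{t₁} · X₁ · S^{t₁} (complex matrices acting on M_{N²}(A) via the unit of A), then the trace t = Tr(X) ∈ A satisfies t·Y_{ij} = F·Y_{ij}·t for all indices i, j. In particular, if F = 1 then Tr(X) commutes with every entry of Y. -/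
import Mathlib


open Matrix
open scoped Kronecker

/-- Partial transposition in the first tensor factor:
`(M^{t₁})_{(a,b),(c,d)} = M_{(c,b),(a,d)}`. -/
def pt1 {ι α : Type*} (M : Matrix (ι × ι) (ι × ι) α) : Matrix (ι × ι) (ι × ι) α :=
  Matrix.of fun p q => M (q.1, p.2) (p.1, q.2)

private lemma trace_exchange_haux {A : Type*} [Ring A] [Algebra ℂ A] (c d : ℂ) (y x : A) :
    y * (algebraMap ℂ A c) * x * (algebraMap ℂ A d) = (c * d) • (y * x) := by
  rw [Algebra.smul_def, RingHom.map_mul, ← Algebra.commutes c y,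
    mul_assoc (algebraMap ℂ A c) y x, mul_assoc (algebraMap ℂ A c) (y * x),
    ← Algebra.commutes d (y * x), ← mul_assoc]

private lemma trace_exchange_lhs {A : Type*} [Ring A] [Algebra ℂ A] {N : ℕ}
    (X Y : Matrix (Fin N) (Fin N) A) (i j : Fin N) :
    ∑ a, ((X ⊗ₖ (1 : Matrix (Fin N) (Fin N) A)) *
        ((1 : Matrix (Fin N) (Fin N) A) ⊗ₖ Y)) (a,i) (a,j) = X.trace * Y i j := by
  simp [Matrix.mul_apply, Matrix.trace, Matrix.one_apply, Fintype.sum_prod_type,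
    mul_ite, ite_mul, Finset.sum_mul, Matrix.diag]

private lemma trace_exchange_rhs {A : Type*} [Ring A] [Algebra ℂ A] {N : ℕ}
    (X Y : Matrix (Fin N) (Fin N) A)
    (S : Matrix (Fin N × Fin N) (Fin N × Fin N) ℂ) (hinv : S⁻¹ * S = 1) (i j : Fin N) :
    ∑ a, (((1 : Matrix (Fin N) (Fin N) A) ⊗ₖ Y) *
        (pt1 S⁻¹).map (algebraMap ℂ A) *
        (X ⊗ₖ (1 : Matrix (Fin N) (Fin N) A)) *
        (pt1 S).map (algebraMap ℂ A)) (a,i) (a,j) = Y i j * X.trace := by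
  have hSS : ∀ p f r : Fin N, (∑ a, ∑ q, S⁻¹ (p,f) (a,q) * S (a,q) (r,j))
      = (1 : Matrix (Fin N × Fin N) (Fin N × Fin N) ℂ) (p,f) (r,j) := by
    intro p f r
    rw [← hinv, Matrix.mul_apply, Fintype.sum_prod_type]
  simp only [Matrix.mul_apply, Matrix.map_apply, kroneckerMap_apply, Matrix.one_apply, pt1,
    of_apply, Finset.sum_mul, Finset.mul_sum]
  simp only [Fintype.sum_prod_type, ite_mul, mul_ite, one_mul, mul_one, zero_mul, mul_zero,
    Finset.sum_ite_eq, Finset.sum_ite_eq', Finset.mem_univ, if_true, Finset.sum_ite_irrel,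
    Finset.sum_const_zero]
  simp only [trace_exchange_haux]
  -- reorder sums (a,r,q,p,f) → (r,p,f,a,q)
  conv_lhs => rw [Finset.sum_comm]
  conv_lhs => enter [2, r, 2, a]; rw [Finset.sum_comm]
  conv_lhs => enter [2, r]; rw [Finset.sum_comm]
  conv_lhs => enter [2, r, 2, p, 2, a]; rw [Finset.sum_comm]
  conv_lhs => enter [2, r, 2, p]; rw [Finset.sum_comm]
  simp only [← Finset.sum_smul]
  simp only [hSS]
  simp [Matrix.one_apply, Prod.mk.injEq, ite_and, ite_smul, one_smul, zero_smul,
    Finset.sum_ite_eq, Finset.sum_ite_eq', Finset.sum_ite_irrel, Finset.sum_const_zero,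
    Matrix.trace, Matrix.diag, Finset.mul_sum]

/-- The trace mechanism underlying Theorem 3.2 and Lemma 3.3 of the paper: if
`X₁ · Y₂ = F · Y₂ · (S⁻¹)^{t₁} · X₁ · S^{t₁}` in `M_{N²}(A)` (with `X₁ = X ⊗ I`,
`Y₂ = I ⊗ Y`, `S` an invertible complex `N²×N²` matrix acting via the unit of `A`),
then `t = Tr(X)` satisfies `t · Y_{ij} = F · Y_{ij} · t` for all `i, j`. -/
theorem trace_exchange {A : Type*} [Ring A] [Algebra ℂ A] (N : ℕ) (hN : 1 ≤ N) (F : ℂ)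
    (X Y : Matrix (Fin N) (Fin N) A)
    (S : Matrix (Fin N × Fin N) (Fin N × Fin N) ℂ) (hS : IsUnit S)
    (h : (X ⊗ₖ (1 : Matrix (Fin N) (Fin N) A)) * ((1 : Matrix (Fin N) (Fin N) A) ⊗ₖ Y) =
      F • (((1 : Matrix (Fin N) (Fin N) A) ⊗ₖ Y) *
        (pt1 S⁻¹).map (algebraMap ℂ A) *
        (X ⊗ₖ (1 : Matrix (Fin N) (Fin N) A)) *
        (pt1 S).map (algebraMap ℂ A))) :
    ∀ i j, X.trace * Y i j = F • (Y i j * X.trace) := by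
  intro i j
  have hdet : IsUnit S.det := (Matrix.isUnit_iff_isUnit_det S).mp hS
  have hinv : S⁻¹ * S = 1 := Matrix.nonsing_inv_mul S hdet
  have hsum : ∑ a, ((X ⊗ₖ (1 : Matrix (Fin N) (Fin N) A)) *
      ((1 : Matrix (Fin N) (Fin N) A) ⊗ₖ Y)) (a,i) (a,j)
      = ∑ a, (F • (((1 : Matrix (Fin N) (Fin N) A) ⊗ₖ Y) *
        (pt1 S⁻¹).map (algebraMap ℂ A) *
        (X ⊗ₖ (1 : Matrix (Fin N) (Fin N) A)) *
        (pt1 S).map (algebraMap ℂ A))) (a,i) (a,j) := by rw [h]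
  rw [trace_exchange_lhs X Y i j] at hsum
  simp only [Matrix.smul_apply] at hsum
  rw [← Finset.smul_sum, trace_exchange_rhs X Y S hinv i j] at hsum
  exact hsum
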